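/- Let G=(V,E) be an undirected graph admitting a nowhere-zero circular k-flow (k ≥ 2 rational), let G⃗=(V,E⁺∪E⁻) be the bidirected version of G, and let w ∈ ℤ^{E⁺∪E⁻} be a nowhere-zero τ-SCD, i.e., w_e ≥ 1 for all arcs e and w(δ⁺(U)) ≥ τ for all nonempty proper U⊆V. Then there exists an integral x with 0 ≤ x ≤ w such that both x and w−x satisfy x(δ⁺(U)) ≥ ⌊τ/(k+1)⌋ and (w−x)(δ⁺(U)) ≥ ⌊τ/(k+1)⌋ for all nonempty proper U⊆V. -/

import Mathlib

open Finset

variable {V E : Type*} [Fintype V] [DecidableEq V] [Fintype E] [DecidableEq E]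

/-- The arcs leaving the vertex set `U` (generic in the arc type). -/
def outArcs {A : Type*} [Fintype A] (src tgt : A → V) (U : Finset V) : Finset A :=
  univ.filter fun a => src a ∈ U ∧ tgt a ∉ U

/-- Source of an arc of the bidirected graph `E × Bool`: `(e, true) = e⁺` goes from `s e` to
`t e`, and `(e, false) = e⁻` goes from `t e` to `s e`. -/
def bsrc (s t : E → V) (p : E × Bool) : V := if p.2 then s p.1 else t p.1

/-- Target of an arc of the bidirected graph `E × Bool`. -/
def btgt (s t : E → V) (p : E × Bool) : V := if p.2 then t p.1 else s p.1

/-- A strongly connected orientation of the graph with edges `E` and endpoints `s`, `t`: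
a choice `O` of one direction per edge such that every nonempty proper cut has a leaving arc. -/
def IsSCO (s t : E → V) (O : E → Bool) : Prop :=
  ∀ U : Finset V, U.Nonempty → U ≠ univ →
    ∃ e : E, (e, O e) ∈ outArcs (bsrc s t) (btgt s t) U

/-- Tail of an edge under the orientation `o`. -/
def otail (s t : E → V) (o : E → Bool) (e : E) : V := if o e then s e else t e

/-- Head of an edge under the orientation `o`. -/
def ohead (s t : E → V) (o : E → Bool) (e : E) : V := if o e then t e else s e

/-- The graph admits a nowhere-zero circular `k`-flow: an orientation together with a
circulation taking values in `[1, k-1]`. -/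
def HasNZCircularFlow (s t : E → V) (k : ℚ) : Prop :=
  ∃ (o : E → Bool) (f : E → ℚ),
    (∀ v : V, ∑ e ∈ univ.filter (fun e => otail s t o e = v), f e
            = ∑ e ∈ univ.filter (fun e => ohead s t o e = v), f e) ∧
    ∀ e : E, 1 ≤ f e ∧ f e ≤ k - 1

set_option linter.unusedSectionVars false in
theorem cut_flow (s t : E → V) (o : E → Bool) (f : E → ℚ)
    (hcons : ∀ v : V, ∑ e ∈ univ.filter (fun e => otail s t o e = v), f e
            = ∑ e ∈ univ.filter (fun e => ohead s t o e = v), f e) (U : Finset V) :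
    ∑ e ∈ univ.filter (fun e => otail s t o e ∈ U ∧ ohead s t o e ∉ U), f e
  = ∑ e ∈ univ.filter (fun e => ohead s t o e ∈ U ∧ otail s t o e ∉ U), f e := by
  have key : ∀ g : E → V, (univ.filter fun e => g e ∈ U) =
      U.biUnion (fun v => univ.filter fun e => g e = v) := by
    intro g; ext e; simp only [mem_filter, mem_univ, true_and, mem_biUnion]
    constructor
    · intro h; exact ⟨g e, h, rfl⟩
    · rintro ⟨v, hv, rfl⟩; exact hv
  have hdisj : ∀ g : E → V, (U : Set V).PairwiseDisjoint
      (fun v => univ.filter fun e => g e = v) := by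
    intro g v _ v' _ hvv'
    simp only [Finset.disjoint_left, mem_filter]
    rintro e ⟨_, rfl⟩ ⟨_, h⟩; exact hvv' h
  have h1 : ∑ e ∈ univ.filter (fun e => otail s t o e ∈ U), f e
          = ∑ e ∈ univ.filter (fun e => ohead s t o e ∈ U), f e := by
    rw [key (otail s t o), key (ohead s t o), Finset.sum_biUnion (hdisj _),
      Finset.sum_biUnion (hdisj _)]
    exact Finset.sum_congr rfl fun v _ => hcons v
  have h2 : ∀ g g' : E → V, ∑ e ∈ univ.filter (fun e => g e ∈ U), f e
      = (∑ e ∈ univ.filter (fun e => g e ∈ U ∧ g' e ∈ U), f e)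
      + ∑ e ∈ univ.filter (fun e => g e ∈ U ∧ g' e ∉ U), f e := by
    intro g g'
    rw [← Finset.sum_filter_add_sum_filter_not (univ.filter fun e => g e ∈ U)
      (fun e => g' e ∈ U), Finset.filter_filter, Finset.filter_filter]
  have e1 := h2 (otail s t o) (ohead s t o)
  have e2 := h2 (ohead s t o) (otail s t o)
  have hcomm : ∑ e ∈ univ.filter (fun e => otail s t o e ∈ U ∧ ohead s t o e ∈ U), f e
      = ∑ e ∈ univ.filter (fun e => ohead s t o e ∈ U ∧ otail s t o e ∈ U), f e := by
    apply Finset.sum_congr _ (fun _ _ => rfl)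
    apply Finset.filter_congr; intro e _; exact and_comm
  linarith


/-- If `G` admits a nowhere-zero circular `k`-flow and `w` is a nowhere-zero `τ`-SCD of the
bidirected graph, then `w` splits as `x + (w - x)` with both parts
`⌊τ/(k+1)⌋`-strongly-connected. -/

theorem decompose_nz_scd (s t : E → V) (k : ℚ) (hk : 2 ≤ k)
    (hflow : HasNZCircularFlow s t k) (τ : ℕ) (w : E × Bool → ℤ)
    (hw1 : ∀ p : E × Bool, 1 ≤ w p)
    (hw2 : ∀ U : Finset V, U.Nonempty → U ≠ univ →
      (τ : ℤ) ≤ ∑ p ∈ outArcs (bsrc s t) (btgt s t) U, w p) :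
    ∃ x : E × Bool → ℤ, (∀ p, 0 ≤ x p ∧ x p ≤ w p) ∧
      ∀ U : Finset V, U.Nonempty → U ≠ univ →
        ⌊(τ : ℚ) / (k + 1)⌋ ≤ ∑ p ∈ outArcs (bsrc s t) (btgt s t) U, x p ∧
        ⌊(τ : ℚ) / (k + 1)⌋ ≤ ∑ p ∈ outArcs (bsrc s t) (btgt s t) U, (w p - x p) := by
  obtain ⟨o, f, hcons, hbd⟩ := hflow
  refine ⟨fun p => if p.2 = o p.1 then (w p + 1) / 2 else w p / 2, ?_, ?_⟩
  · intro p
    have := hw1 p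
    by_cases h : p.2 = o p.1 <;> simp only [h, if_true, if_false] <;> omega
  · intro U hU hU'
    have hW := hw2 U hU hU'
    set Sp := univ.filter (fun e => otail s t o e ∈ U ∧ ohead s t o e ∉ U) with hSpdef
    set Sm := univ.filter (fun e => ohead s t o e ∈ U ∧ otail s t o e ∉ U) with hSmdef
    -- decomposition of the out-arc set
    have hAeq : outArcs (bsrc s t) (btgt s t) U
        = Sp.image (fun e => (e, o e)) ∪ Sm.image (fun e => (e, !o e)) := by
      ext ⟨e, b⟩
      simp only [outArcs, mem_filter, mem_univ, true_and, mem_union,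
        mem_image, hSpdef, hSmdef, Prod.mk.injEq]
      simp only [bsrc, btgt, otail, ohead]
      constructor
      · rintro ⟨h1, h2⟩
        cases hb : b <;> cases ho : o e <;> simp_all
      · rintro (⟨a, ha, rfl, rfl⟩ | ⟨a, ha, rfl, rfl⟩) <;>
          cases ho : o a <;> simp_all
    have hinj1 : ∀ x ∈ Sp, ∀ y ∈ Sp, (x, o x) = (y, o y) → x = y := by
      intro x _ y _ h; exact (Prod.mk.injEq _ _ _ _).mp h |>.1
    have hinj2 : ∀ x ∈ Sm, ∀ y ∈ Sm, (x, !o x) = (y, !o y) → x = y := by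
      intro x _ y _ h; exact (Prod.mk.injEq _ _ _ _).mp h |>.1
    have hdisj : Disjoint (Sp.image fun e => (e, o e)) (Sm.image fun e => (e, !o e)) := by
      simp only [Finset.disjoint_left, mem_image]
      rintro p ⟨a, _, rfl⟩ ⟨a', _, h⟩
      rw [Prod.mk.injEq] at h
      obtain ⟨rfl, h2⟩ := h
      simp at h2
    have hsum : ∀ g : E × Bool → ℤ, ∑ p ∈ outArcs (bsrc s t) (btgt s t) U, g p
        = ∑ e ∈ Sp, g (e, o e) + ∑ e ∈ Sm, g (e, !o e) := by
      intro g
      rw [hAeq, Finset.sum_union hdisj, Finset.sum_image hinj1, Finset.sum_image hinj2]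
    -- abbreviations
    set X := ∑ p ∈ outArcs (bsrc s t) (btgt s t) U,
      (if p.2 = o p.1 then (w p + 1) / 2 else w p / 2) with hXdef
    set W := ∑ p ∈ outArcs (bsrc s t) (btgt s t) U, w p with hWdef
    have hXsplit : X = ∑ e ∈ Sp, (w (e, o e) + 1) / 2 + ∑ e ∈ Sm, w (e, !o e) / 2 := by
      rw [hXdef, hsum]
      congr 1 <;> apply Finset.sum_congr rfl <;> intro e _ <;> simp
    have hWsplit : W = ∑ e ∈ Sp, w (e, o e) + ∑ e ∈ Sm, w (e, !o e) := hsum w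
    -- integer inequalities
    have hXmp : (Sp.card : ℤ) ≤ X := by
      rw [hXsplit]
      have h1 : (Sp.card : ℤ) = ∑ e ∈ Sp, (1 : ℤ) := by simp
      have h2 : (0 : ℤ) ≤ ∑ e ∈ Sm, w (e, !o e) / 2 :=
        Finset.sum_nonneg fun e _ => by have := hw1 (e, !o e); omega
      have h3 : ∑ e ∈ Sp, (1 : ℤ) ≤ ∑ e ∈ Sp, (w (e, o e) + 1) / 2 :=
        Finset.sum_le_sum fun e _ => by have := hw1 (e, o e); omega
      omega
    have hX2 : W - Sm.card ≤ 2 * X := by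
      rw [hXsplit, hWsplit]
      have h1 : ∑ e ∈ Sp, w (e, o e) ≤ ∑ e ∈ Sp, 2 * ((w (e, o e) + 1) / 2) :=
        Finset.sum_le_sum fun e _ => by have := hw1 (e, o e); omega
      have h2 : ∑ e ∈ Sm, w (e, !o e) ≤ ∑ e ∈ Sm, (2 * (w (e, !o e) / 2) + 1) :=
        Finset.sum_le_sum fun e _ => by have := hw1 (e, !o e); omega
      rw [Finset.sum_add_distrib] at h2
      rw [← Finset.mul_sum] at h1 h2
      simp only [Finset.sum_const, nsmul_eq_mul, mul_one] at h2
      omega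
    set Y := ∑ p ∈ outArcs (bsrc s t) (btgt s t) U,
      (w p - if p.2 = o p.1 then (w p + 1) / 2 else w p / 2) with hYdef
    have hYX : Y = W - X := by
      rw [hYdef, hWdef, hXdef, ← Finset.sum_sub_distrib]
    have hYmm : (Sm.card : ℤ) ≤ Y := by
      rw [hYX, hXsplit, hWsplit]
      have h1 : (Sm.card : ℤ) = ∑ e ∈ Sm, (1 : ℤ) := by simp
      have h2 : ∑ e ∈ Sp, (w (e, o e) + 1) / 2 ≤ ∑ e ∈ Sp, w (e, o e) :=
        Finset.sum_le_sum fun e _ => by have := hw1 (e, o e); omega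
      have h3 : ∑ e ∈ Sm, ((1 : ℤ) + w (e, !o e) / 2) ≤ ∑ e ∈ Sm, w (e, !o e) :=
        Finset.sum_le_sum fun e _ => by have := hw1 (e, !o e); omega
      rw [Finset.sum_add_distrib] at h3
      simp only [Finset.sum_const, nsmul_eq_mul, mul_one] at h3
      omega
    have hY2 : W - Sp.card ≤ 2 * Y := by
      rw [hYX, hXsplit, hWsplit]
      have h1 : ∑ e ∈ Sp, w (e, o e) ≤ ∑ e ∈ Sp, (2 * (w (e, o e) - (w (e, o e) + 1) / 2) + 1) :=
        Finset.sum_le_sum fun e _ => by have := hw1 (e, o e); omega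
      have h2 : ∑ e ∈ Sm, w (e, !o e) ≤ ∑ e ∈ Sm, 2 * (w (e, !o e) - w (e, !o e) / 2) :=
        Finset.sum_le_sum fun e _ => by have := hw1 (e, !o e); omega
      rw [Finset.sum_add_distrib] at h1
      simp only [Finset.sum_const, nsmul_eq_mul, mul_one] at h1
      rw [← Finset.mul_sum] at h1 h2
      rw [Finset.sum_sub_distrib] at h1 h2
      omega
    -- cut balance from the flow
    have hcut := cut_flow s t o f hcons U
    have hfp : (Sp.card : ℚ) ≤ ∑ e ∈ Sp, f e := by
      have : ∑ e ∈ Sp, (1 : ℚ) ≤ ∑ e ∈ Sp, f e :=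
        Finset.sum_le_sum fun e _ => (hbd e).1
      simpa using this
    have hfp' : ∑ e ∈ Sp, f e ≤ (Sp.card : ℚ) * (k - 1) := by
      have : ∑ e ∈ Sp, f e ≤ ∑ e ∈ Sp, (k - 1) :=
        Finset.sum_le_sum fun e _ => (hbd e).2
      simpa [mul_sub] using this
    have hfm : (Sm.card : ℚ) ≤ ∑ e ∈ Sm, f e := by
      have : ∑ e ∈ Sm, (1 : ℚ) ≤ ∑ e ∈ Sm, f e :=
        Finset.sum_le_sum fun e _ => (hbd e).1
      simpa using this
    have hfm' : ∑ e ∈ Sm, f e ≤ (Sm.card : ℚ) * (k - 1) := by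
      have : ∑ e ∈ Sm, f e ≤ ∑ e ∈ Sm, (k - 1) :=
        Finset.sum_le_sum fun e _ => (hbd e).2
      simpa [mul_sub] using this
    have hbal1 : (Sp.card : ℚ) ≤ (Sm.card : ℚ) * (k - 1) := by
      calc (Sp.card : ℚ) ≤ ∑ e ∈ Sp, f e := hfp
        _ = ∑ e ∈ Sm, f e := hcut
        _ ≤ (Sm.card : ℚ) * (k - 1) := hfm'
    have hbal2 : (Sm.card : ℚ) ≤ (Sp.card : ℚ) * (k - 1) := by
      calc (Sm.card : ℚ) ≤ ∑ e ∈ Sm, f e := hfm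
        _ = ∑ e ∈ Sp, f e := hcut.symm
        _ ≤ (Sp.card : ℚ) * (k - 1) := hfp'
    -- assemble
    have hk1 : (0 : ℚ) < k + 1 := by linarith
    have main : ∀ (Z : ℤ) (m m' : ℕ), (m : ℤ) ≤ Z → W - m' ≤ 2 * Z →
        (m' : ℚ) ≤ (m : ℚ) * (k - 1) → ⌊(τ : ℚ) / (k + 1)⌋ ≤ Z := by
      intro Z m m' h1 h2 h3
      have h1q : (m : ℚ) ≤ (Z : ℚ) := by exact_mod_cast h1
      have h2q : (W : ℚ) - m' ≤ 2 * (Z : ℚ) := by exact_mod_cast h2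
      have hWq : (τ : ℚ) ≤ (W : ℚ) := by exact_mod_cast hW
      have hmul : (m : ℚ) * (k - 1) ≤ (Z : ℚ) * (k - 1) :=
        mul_le_mul_of_nonneg_right h1q (by linarith)
      have hfin : (τ : ℚ) / (k + 1) ≤ (Z : ℚ) := by
        rw [div_le_iff₀ hk1]
        nlinarith
      calc ⌊(τ : ℚ) / (k + 1)⌋ ≤ ⌊(Z : ℚ)⌋ := Int.floor_le_floor hfin
        _ = Z := Int.floor_intCast Z
    exact ⟨main X Sp.card Sm.card hXmp hX2 hbal2, main Y Sm.card Sp.card hYmm hY2 hbal1⟩
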